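/- arXiv:2305.13446 — 6 statements merged into one kernel-verified Lean document; each statement's English description precedes it below -/
import Mathlib

section
/- If G is a connected graph containing a p-preferred node, then the power domination number of G is 1. -/
variable {V : Type*}

/-- Closed neighborhood of a set `A`: vertices in `A` or adjacent to a vertex of `A`
(the result of the domination step). -/
def closedNbhd (G : SimpleGraph V) (A : Set V) : Set V :=
  {w | ∃ v ∈ A, w = v ∨ G.Adj v w}

/-- One zero forcing step: an observed vertex `u` with exactly one unobserved neighbor `w`
forces `w`, enlarging the observed set `S` to `insert w S`. -/
def ForceStep (G : SimpleGraph V) (S T : Set V) : Prop :=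
  ∃ u w, u ∈ S ∧ w ∉ S ∧ G.Adj u w ∧ (∀ x, G.Adj u x → x ∉ S → x = w) ∧ T = insert w S

/-- `Observes G A O` : starting from the closed neighborhood of `A`, some sequence of
zero forcing steps yields observed set `O`. -/
def Observes (G : SimpleGraph V) (A O : Set V) : Prop :=
  Relation.ReflTransGen (ForceStep G) (closedNbhd G A) O

/-- No further zero forcing step applies from `O`. -/
def Stalled (G : SimpleGraph V) (O : Set V) : Prop := ∀ T, ¬ ForceStep G O T

/-- `A` is a power dominating set: the process observes every vertex. -/
def IsPDS (G : SimpleGraph V) (A : Set V) : Prop := Observes G A Set.univ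

/-- The power domination number: minimum size of a power dominating set. -/
noncomputable def pdn (G : SimpleGraph V) [Fintype V] : ℕ :=
  sInf {n | ∃ A : Finset V, IsPDS G (↑A : Set V) ∧ A.card = n}

/-- A fort: a nonempty set such that no outside vertex has exactly one neighbor in it. -/
def IsFort (G : SimpleGraph V) (F : Set V) : Prop :=
  F.Nonempty ∧ ∀ u ∉ F, ¬ ∃! w, w ∈ F ∧ G.Adj u w

/-- A terminal fort with cut vertex `v`: a fort whose only external neighbor is `v`. -/
def IsTerminalFort (G : SimpleGraph V) (v : V) (F : Set V) : Prop :=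
  IsFort G F ∧ v ∉ F ∧ ∀ u ∉ F, (∃ w ∈ F, G.Adj u w) → u = v

/-- `v` is f-preferred with terminal fort `F`: the process with input `{v}` observes all of `F`. -/
def FPreferred (G : SimpleGraph V) (v : V) (F : Set V) : Prop :=
  IsTerminalFort G v F ∧ ∃ O, Observes G {v} O ∧ F ⊆ O

/-- `v` is p-preferred: f-preferred with a terminal fort containing another f-preferred vertex. -/
def PPreferred (G : SimpleGraph V) (v : V) : Prop :=
  ∃ F, FPreferred G v F ∧ ∃ w ∈ F, w ≠ v ∧ ∃ F', FPreferred G w F'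

/- ### Auxiliary lemmas -/

/-- Forcing only enlarges the observed set. -/
private lemma obs_subset {G : SimpleGraph V} {S T : Set V}
    (h : Relation.ReflTransGen (ForceStep G) S T) : S ⊆ T := by
  induction h with
  | refl => exact subset_rfl
  | tail _ hstep ih =>
    obtain ⟨u, x, _, _, _, _, rfl⟩ := hstep
    exact ih.trans (Set.subset_insert _ _)

/-- Nothing can be forced starting from the empty set. -/
private lemma obs_empty {G : SimpleGraph V} {T : Set V}
    (h : Relation.ReflTransGen (ForceStep G) (∅ : Set V) T) : T = ∅ := by
  induction h with
  | refl => rfl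
  | tail _ hstep ih =>
    obtain ⟨u, x, huS, _⟩ := hstep
    rw [ih] at huS
    exact absurd huS (Set.notMem_empty u)

/-- Monotonicity of the zero forcing process. -/
private lemma obs_mono {G : SimpleGraph V} {S S' T : Set V} (hss : S ⊆ S')
    (h : Relation.ReflTransGen (ForceStep G) S T) :
    ∃ T', T ⊆ T' ∧ Relation.ReflTransGen (ForceStep G) S' T' := by
  induction h with
  | refl => exact ⟨S', hss, Relation.ReflTransGen.refl⟩
  | tail _ hstep ih =>
    obtain ⟨T', hT1, hT2⟩ := ih
    obtain ⟨u, x, huS, hxS, hadj, huniq, rfl⟩ := hstep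
    by_cases hxT : x ∈ T'
    · exact ⟨T', Set.insert_subset_iff.mpr ⟨hxT, hT1⟩, hT2⟩
    · refine ⟨insert x T', Set.insert_subset_insert hT1, hT2.tail ?_⟩
      exact ⟨u, x, hT1 huS, hxT, hadj,
        fun z hz hzT => huniq z hz (fun hzS => hzT (hT1 hzS)), rfl⟩

/-- A fort disjoint from the observed set stays unobserved under zero forcing. -/
private lemma fort_avoid {G : SimpleGraph V} {F S T : Set V} (hF : IsFort G F)
    (hS : ∀ x ∈ S, x ∉ F) (h : Relation.ReflTransGen (ForceStep G) S T) :
    ∀ x ∈ T, x ∉ F := by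
  induction h with
  | refl => exact hS
  | tail _ hstep ih =>
    obtain ⟨u, x, huS, hxS, hadj, huniq, rfl⟩ := hstep
    intro y hy hyF
    rcases Set.mem_insert_iff.mp hy with rfl | hy
    · exact hF.2 u (ih u huS)
        ⟨y, ⟨hyF, hadj⟩, fun z hz => huniq z hz.2 (fun hzS => (ih z hzS) hz.1)⟩
    · exact (ih y hy) hyF

/-- Any walk leaving a terminal fort passes through its cut vertex. -/
private lemma walk_cut {G : SimpleGraph V} {F : Set V} {v : V}
    (hterm : ∀ u ∉ F, (∃ w ∈ F, G.Adj u w) → u = v) :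
    ∀ {a b : V} (p : G.Walk a b), a ∈ F → b ∉ F → v ∈ p.support := by
  intro a b p
  induction p with
  | nil => intro ha hb; exact absurd ha hb
  | @cons a c b h q ih =>
    intro ha hb
    rw [SimpleGraph.Walk.support_cons, List.mem_cons]
    by_cases hcF : c ∈ F
    · exact Or.inr (ih hcF hb)
    · have hcv : c = v := hterm c hcF ⟨a, ha, h.symm⟩
      exact Or.inr (hcv ▸ q.start_mem_support)

/-- From outside a terminal fort, one can reach the cut vertex avoiding the fort,
provided the walk ends inside the fort. -/
private lemma walk_outside {G : SimpleGraph V} {F' : Set V} {w : V}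
    (hterm : ∀ u ∉ F', (∃ z ∈ F', G.Adj u z) → u = w) (hw : w ∉ F') :
    ∀ {a b : V} (p : G.Walk a b), a ∉ F' → b ∈ F' →
      ∃ q : G.Walk a w, ∀ x ∈ q.support, x ∉ F' := by
  intro a b p
  induction p with
  | nil => intro ha hb; exact absurd hb ha
  | @cons a c b h q ih =>
    intro ha hb
    by_cases hcF : c ∈ F'
    · have haw : a = w := hterm a ha ⟨c, hcF, h⟩
      subst haw
      exact ⟨SimpleGraph.Walk.nil, by
        intro x hx
        rw [SimpleGraph.Walk.support_nil, List.mem_singleton] at hx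
        exact hx ▸ hw⟩
    · obtain ⟨q', hq'⟩ := ih hcF hb
      refine ⟨SimpleGraph.Walk.cons h q', ?_⟩
      intro x hx
      rw [SimpleGraph.Walk.support_cons, List.mem_cons] at hx
      rcases hx with rfl | hx
      · exact ha
      · exact hq' x hx

/-- Key impossibility: walking from a vertex of `F' \ F` to `v` is impossible when
`F` is a terminal fort at `v`, `F'` a terminal fort at `w ∈ F`, and `v ∉ F' ∪ F`. -/
private lemma walk_case2 {G : SimpleGraph V} {F F' : Set V} {v w : V}
    (hFterm : ∀ u ∉ F, (∃ z ∈ F, G.Adj u z) → u = v)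
    (hF'term : ∀ u ∉ F', (∃ z ∈ F', G.Adj u z) → u = w)
    (hwF : w ∈ F) (hvF : v ∉ F) (hvF' : v ∉ F') :
    ∀ {a b : V} (p : G.Walk a b), b = v → a ∈ F' → a ∉ F → False := by
  intro a b p
  induction p with
  | nil =>
    intro hbv ha _
    exact hvF' (hbv ▸ ha)
  | @cons a c b h q ih =>
    intro hbv haF' haF
    by_cases hcF' : c ∈ F'
    · by_cases hcF : c ∈ F
      · -- a is outside F, adjacent to c ∈ F, so a = v ∈ F', contradiction
        have : a = v := hFterm a haF ⟨c, hcF, h⟩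
        exact hvF' (this ▸ haF')
      · exact ih hbv hcF' hcF
    · -- c is outside F', adjacent to a ∈ F', so c = w ∈ F; then a = v
      have hcw : c = w := hF'term c hcF' ⟨a, haF', h.symm⟩
      have : a = v := hFterm a haF ⟨c, hcw ▸ hwF, h⟩
      exact hvF' (this ▸ haF')

/-- If a connected graph contains a p-preferred node, its power domination number is 1. -/
theorem stmt_0 {V : Type*} [Fintype V] (G : SimpleGraph V) (hc : G.Connected)
    (v : V) (hv : PPreferred G v) : pdn G = 1 := by
  obtain ⟨F, ⟨⟨hFfort, hvF, hFterm⟩, O1, hO1, hFO1⟩,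
    w, hwF, hwv, F', ⟨⟨hF'fort, hwF', hF'term⟩, O2, hO2, hF'O2⟩⟩ := hv
  have hvCN : v ∈ closedNbhd G ({v} : Set V) := ⟨v, rfl, Or.inl rfl⟩
  have hvO1 : v ∈ O1 := obs_subset hO1 hvCN
  -- The closed neighborhood of w is contained in the set observed from v.
  have hNw : closedNbhd G ({w} : Set V) ⊆ O1 := by
    rintro x ⟨u, hu, hx⟩
    rw [Set.mem_singleton_iff] at hu
    rw [hu] at hx
    rcases hx with rfl | hadj
    · exact hFO1 hwF
    · by_cases hxF : x ∈ F
      · exact hFO1 hxF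
      · have : x = v := hFterm x hxF ⟨w, hwF, hadj.symm⟩
        exact this ▸ hvO1
  obtain ⟨T, hT1, hT2⟩ := obs_mono hNw hO2
  have hObsT : Observes G ({v} : Set V) T := hO1.trans hT2
  have hO1T : O1 ⊆ T := obs_subset hT2
  -- Case analysis on whether v belongs to F'
  by_cases hvF' : v ∈ F'
  · -- Main case: the whole vertex set is F ∪ F' ∪ {v, w}, all observed.
    have hTuniv : T = Set.univ := by
      apply Set.eq_univ_of_forall
      intro x
      by_cases hxF : x ∈ F
      · exact hO1T (hFO1 hxF)
      by_cases hxF' : x ∈ F'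
      · exact hT1 (hF'O2 hxF')
      by_cases hxv : x = v
      · exact hxv ▸ hO1T hvO1
      exfalso
      obtain ⟨p⟩ := hc.preconnected x v
      obtain ⟨q, hq⟩ := walk_outside hF'term hwF' p hxF' hvF'
      have hvq : v ∈ q.support := by
        have := walk_cut hFterm q.reverse hwF hxF
        rwa [SimpleGraph.Walk.support_reverse, List.mem_reverse] at this
      exact hq v hvq hvF'
    -- {v} is a power dominating set.
    have hPDS : IsPDS G (↑({v} : Finset V) : Set V) := by
      rw [Finset.coe_singleton, IsPDS, ← hTuniv]
      exact hObsT
    have h1mem : 1 ∈ {n | ∃ A : Finset V, IsPDS G (↑A : Set V) ∧ A.card = n} :=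
      ⟨{v}, hPDS, Finset.card_singleton v⟩
    have h0 : (0 : ℕ) ∉ {n | ∃ A : Finset V, IsPDS G (↑A : Set V) ∧ A.card = n} := by
      rintro ⟨A, hA, hcard⟩
      rw [Finset.card_eq_zero] at hcard; subst hcard
      have hempty : closedNbhd G (↑(∅ : Finset V) : Set V) = (∅ : Set V) := by
        ext x
        simp [closedNbhd]
      rw [IsPDS, Observes, hempty] at hA
      have := obs_empty hA
      exact Set.eq_empty_iff_forall_notMem.mp this v (this ▸ Set.mem_univ v)
    rw [pdn]
    refine le_antisymm (Nat.sInf_le h1mem) ?_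
    rw [Nat.one_le_iff_ne_zero]
    intro h0eq
    rcases Nat.sInf_eq_zero.mp h0eq with h | h
    · exact h0 h
    · exact absurd (h ▸ h1mem) (Set.notMem_empty 1)
  · -- Impossible case: v ∉ F' leads to a contradiction.
    exfalso
    have hCNF' : ∀ x ∈ closedNbhd G ({v} : Set V), x ∉ F' := by
      rintro x ⟨u, hu, hx⟩ hxF'
      rw [Set.mem_singleton_iff] at hu
      rw [hu] at hx
      rcases hx with rfl | hadj
      · exact hvF' hxF'
      · have : v = w := hF'term v hvF' ⟨x, hxF', hadj⟩
        exact hvF (this ▸ hwF)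
    have hO1F' : ∀ x ∈ O1, x ∉ F' := fort_avoid ⟨hF'fort.1, hF'fort.2⟩ hCNF' hO1
    obtain ⟨y, hyF'⟩ := hF'fort.1
    by_cases hyF : y ∈ F
    · exact hO1F' y (hFO1 hyF) hyF'
    · obtain ⟨p⟩ := hc.preconnected y v
      exact walk_case2 hFterm hF'term hwF hvF hvF' p rfl hyF' hyF
end

section
/- If G is a connected graph that contains at least one vertex of degree at least 3, then there exists a minimum power dominating set of G consisting only of vertices of degree at least 3. -/
variable {V : Type*}

/-! ### Auxiliary closure machinery -/

/-- Zero-forcing closure: the intersection of all stalled supersets. -/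
def zfCl (G : SimpleGraph V) (S : Set V) : Set V := ⋂₀ {T | S ⊆ T ∧ Stalled G T}

lemma subset_zfCl (G : SimpleGraph V) (S : Set V) : S ⊆ zfCl G S :=
  fun x hx => Set.mem_sInter.2 fun _ hT => hT.1 hx

lemma zfCl_subset (G : SimpleGraph V) {S T : Set V} (hST : S ⊆ T) (hT : Stalled G T) :
    zfCl G S ⊆ T := fun x hx => Set.mem_sInter.1 hx T ⟨hST, hT⟩

lemma stalled_zfCl (G : SimpleGraph V) (S : Set V) : Stalled G (zfCl G S) := by
  rintro T ⟨u, w, huS, hwS, hadj, huniq, rfl⟩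
  refine hwS (Set.mem_sInter.2 fun T' hT' => ?_)
  by_contra hw
  exact hT'.2 _ ⟨u, w, Set.mem_sInter.1 huS T' hT', hw, hadj,
    fun x hx hxT' => huniq x hx (fun hxcl => hxT' (Set.mem_sInter.1 hxcl T' hT')), rfl⟩

lemma zfCl_mono (G : SimpleGraph V) {S T : Set V} (h : S ⊆ T) : zfCl G S ⊆ zfCl G T :=
  zfCl_subset G (h.trans (subset_zfCl G T)) (stalled_zfCl G T)

lemma reach_subset_zfCl (G : SimpleGraph V) {S O : Set V}
    (h : Relation.ReflTransGen (ForceStep G) S O) : O ⊆ zfCl G S := by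
  induction h with
  | refl => exact subset_zfCl G S
  | tail hre hstep ih =>
    obtain ⟨u, w, huO, hwO, hadj, huniq, rfl⟩ := hstep
    intro x hx
    rcases hx with rfl | hx
    · by_contra hw
      exact stalled_zfCl G S _ ⟨u, x, ih huO, hw, hadj,
        fun y hy hycl => huniq y hy (fun hyO => hycl (ih hyO)), rfl⟩
    · exact ih hx

lemma subset_of_reach (G : SimpleGraph V) {S O : Set V}
    (h : Relation.ReflTransGen (ForceStep G) S O) : S ⊆ O := by
  induction h with
  | refl => exact subset_rfl
  | tail hre hstep ih =>
    obtain ⟨u, w, _, _, _, _, rfl⟩ := hstep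
    exact ih.trans (Set.subset_insert _ _)

lemma exists_stalled_reach (G : SimpleGraph V) [Fintype V] (S : Set V) :
    ∃ O, Relation.ReflTransGen (ForceStep G) S O ∧ Stalled G O := by
  classical
  set N : Set ℕ := {n | ∃ O, Relation.ReflTransGen (ForceStep G) S O ∧ O.ncard = n} with hN
  have hne : N.Nonempty := ⟨S.ncard, S, Relation.ReflTransGen.refl, rfl⟩
  have hbdd : BddAbove N := by
    refine ⟨Fintype.card V, ?_⟩
    rintro n ⟨O, _, rfl⟩
    simpa [Set.ncard_univ] using Set.ncard_le_ncard (Set.subset_univ O) Set.finite_univ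
  obtain ⟨O, hO, hcard⟩ := Nat.sSup_mem hne hbdd
  refine ⟨O, hO, fun T hT => ?_⟩
  obtain ⟨u, w, huO, hwO, hadj, huniq, rfl⟩ := hT
  have h1 : (insert w O).ncard = O.ncard + 1 := Set.ncard_insert_of_notMem hwO O.toFinite
  have h2 : (insert w O).ncard ∈ N :=
    ⟨insert w O, hO.tail ⟨u, w, huO, hwO, hadj, huniq, rfl⟩, rfl⟩
  have := le_csSup hbdd h2
  omega

lemma reach_zfCl (G : SimpleGraph V) [Fintype V] (S : Set V) :
    Relation.ReflTransGen (ForceStep G) S (zfCl G S) := by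
  obtain ⟨O, hO, hstall⟩ := exists_stalled_reach G S
  have hOe : O = zfCl G S :=
    subset_antisymm (reach_subset_zfCl G hO) (zfCl_subset G (subset_of_reach G hO) hstall)
  exact hOe ▸ hO

lemma isPDS_iff (G : SimpleGraph V) [Fintype V] (A : Set V) :
    IsPDS G A ↔ zfCl G (closedNbhd G A) = Set.univ :=
  ⟨fun h => Set.eq_univ_of_univ_subset (reach_subset_zfCl G h),
   fun h => by
    have := reach_zfCl G (closedNbhd G A)
    rw [h] at this
    exact this⟩

lemma closedNbhd_union (G : SimpleGraph V) (A B : Set V) :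
    closedNbhd G (A ∪ B) = closedNbhd G A ∪ closedNbhd G B := by
  ext x
  simp only [closedNbhd, Set.mem_setOf_eq, Set.mem_union]
  constructor
  · rintro ⟨v, hv | hv, hx⟩
    · exact Or.inl ⟨v, hv, hx⟩
    · exact Or.inr ⟨v, hv, hx⟩
  · rintro (⟨v, hv, hx⟩ | ⟨v, hv, hx⟩)
    · exact ⟨v, Or.inl hv, hx⟩
    · exact ⟨v, Or.inr hv, hx⟩

/-- Key swap lemma: if `v` has degree ≤ 2 and `u` is a neighbor, everything the domination
step with `{v}` observes is eventually observed starting from `{u}`. -/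
lemma key_swap (G : SimpleGraph V) [Fintype V] [DecidableRel G.Adj] {v u : V}
    (hdeg : G.degree v ≤ 2) (hadj : G.Adj v u) :
    closedNbhd G {v} ⊆ zfCl G (closedNbhd G {u}) := by
  classical
  have hvmem : v ∈ closedNbhd G {u} := ⟨u, rfl, Or.inr hadj.symm⟩
  have humem : u ∈ closedNbhd G {u} := ⟨u, rfl, Or.inl rfl⟩
  rintro x ⟨a, ha, hco⟩
  rw [Set.mem_singleton_iff] at ha
  rw [ha] at hco
  rcases hco with heq | hx
  · rw [heq]; exact subset_zfCl G _ hvmem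
  · by_cases hxu : x = u
    · rw [hxu]; exact subset_zfCl G _ humem
    · by_contra hxc
      refine stalled_zfCl G (closedNbhd G {u}) _
        ⟨v, x, subset_zfCl G _ hvmem, hxc, hx, fun y hy hyc => ?_, rfl⟩
      -- neighbors of v are exactly {u, x}
      have hsub : ({u, x} : Finset V) ⊆ G.neighborFinset v := by
        intro z hz
        rcases Finset.mem_insert.1 hz with rfl | hz
        · exact (SimpleGraph.mem_neighborFinset G v z).2 hadj
        · rw [Finset.mem_singleton] at hz
          exact hz ▸ (SimpleGraph.mem_neighborFinset G v x).2 hx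
      have hcard : (G.neighborFinset v).card ≤ ({u, x} : Finset V).card := by
        rw [Finset.card_pair (Ne.symm hxu)]
        exact hdeg
      have heq := Finset.eq_of_subset_of_card_le hsub hcard
      have hy' : y ∈ ({u, x} : Finset V) := heq ▸ (SimpleGraph.mem_neighborFinset G v y).2 hy
      rcases Finset.mem_insert.1 hy' with rfl | hy'
      · exact absurd (subset_zfCl G _ humem) hyc
      · exact Finset.mem_singleton.1 hy'

lemma swap_pds (G : SimpleGraph V) [Fintype V] {v u : V} (B : Set V)
    (hvu : closedNbhd G {v} ⊆ zfCl G (closedNbhd G {u}))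
    (hPDS : zfCl G (closedNbhd G ({v} ∪ B)) = Set.univ) :
    zfCl G (closedNbhd G ({u} ∪ B)) = Set.univ := by
  have hN : closedNbhd G ({v} ∪ B) ⊆ zfCl G (closedNbhd G ({u} ∪ B)) := by
    rw [closedNbhd_union]
    rintro x (hx | hx)
    · exact zfCl_mono G (by rw [closedNbhd_union]; exact Set.subset_union_left) (hvu hx)
    · exact subset_zfCl G _ (by rw [closedNbhd_union]; exact Or.inr hx)
  have := zfCl_subset G hN (stalled_zfCl G _)
  rw [hPDS] at this
  exact Set.eq_univ_of_univ_subset this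

lemma pds_univ (G : SimpleGraph V) [Fintype V] : IsPDS G (↑(Finset.univ : Finset V) : Set V) := by
  have : closedNbhd G (↑(Finset.univ : Finset V)) = Set.univ := by
    apply Set.eq_univ_of_univ_subset
    intro w _
    exact ⟨w, by simp, Or.inl rfl⟩
  unfold IsPDS Observes
  rw [this]

lemma pdn_le (G : SimpleGraph V) [Fintype V] {A : Finset V} (h : IsPDS G (↑A : Set V)) :
    pdn G ≤ A.card := Nat.sInf_le ⟨A, h, rfl⟩

lemma exists_closer_neighbor (G : SimpleGraph V) (hc : G.Connected) {v t : V} (hvt : v ≠ t) :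
    ∃ u, G.Adj v u ∧ G.dist u t + 1 = G.dist v t := by
  obtain ⟨p, hp⟩ := hc.exists_walk_length_eq_dist v t
  have hpos : 0 < G.dist v t := hc.pos_dist_of_ne hvt
  cases p with
  | nil => simp at hp; exact absurd rfl hvt
  | cons hadj q =>
    rename_i u
    refine ⟨u, hadj, ?_⟩
    have h1 : G.dist u t ≤ q.length := SimpleGraph.dist_le q
    obtain ⟨r, hr⟩ := hc.exists_walk_length_eq_dist u t
    have h2 : G.dist v t ≤ (SimpleGraph.Walk.cons hadj r).length := SimpleGraph.dist_le _
    simp [SimpleGraph.Walk.length_cons] at hp h2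
    omega
/-- A connected graph with a vertex of degree at least 3 has a minimum power dominating set
consisting only of vertices of degree at least 3. -/
theorem stmt_2 {V : Type*} [Fintype V] (G : SimpleGraph V) [DecidableRel G.Adj]
    (hc : G.Connected) (h : ∃ v : V, 3 ≤ G.degree v) :
    ∃ A : Finset V, IsPDS G (↑A : Set V) ∧ A.card = pdn G ∧ ∀ v ∈ A, 3 ≤ G.degree v := by
  classical
  obtain ⟨t, ht⟩ := h
  have hne : {n | ∃ A : Finset V, IsPDS G (↑A : Set V) ∧ A.card = n}.Nonempty :=
    ⟨(Finset.univ : Finset V).card, Finset.univ, pds_univ G, rfl⟩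
  obtain ⟨A₀, hA₀, hcard₀⟩ := Nat.sInf_mem hne
  suffices H : ∀ n (A : Finset V), (∑ x ∈ A, G.dist x t) = n → IsPDS G (↑A : Set V) →
      A.card = pdn G →
      ∃ B : Finset V, IsPDS G (↑B : Set V) ∧ B.card = pdn G ∧ ∀ v ∈ B, 3 ≤ G.degree v by
    exact H _ A₀ rfl hA₀ hcard₀
  intro n
  induction n using Nat.strong_induction_on with
  | _ n ih =>
    intro A hsum hPDS hcard
    by_cases hall : ∀ v ∈ A, 3 ≤ G.degree v
    · exact ⟨A, hPDS, hcard, hall⟩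
    push_neg at hall
    obtain ⟨v, hvA, hvdeg⟩ := hall
    have hvdeg' : G.degree v ≤ 2 := by omega
    have hvt : v ≠ t := by rintro rfl; omega
    obtain ⟨u, hadj, hdu⟩ := exists_closer_neighbor G hc hvt
    have hkey := key_swap G hvdeg' hadj
    set B : Finset V := insert u (A.erase v) with hB
    have hAv : (↑A : Set V) = {v} ∪ (↑(A.erase v) : Set V) := by
      rw [Finset.coe_erase]
      rw [Set.singleton_union, Set.insert_diff_singleton,
        Set.insert_eq_self.2 (by exact_mod_cast hvA)]
    have hBu : (↑B : Set V) = {u} ∪ (↑(A.erase v) : Set V) := by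
      rw [hB, Finset.coe_insert, Set.singleton_union]
    have hPDS' : IsPDS G (↑B : Set V) := by
      rw [isPDS_iff] at hPDS ⊢
      rw [hBu]
      rw [hAv] at hPDS
      exact swap_pds G _ hkey hPDS
    have hle : pdn G ≤ B.card := pdn_le G hPDS'
    have hA1 : 1 ≤ A.card := Finset.card_pos.2 ⟨v, hvA⟩
    have huA : u ∉ A.erase v := by
      intro hu
      have hBe : B = A.erase v := by rw [hB, Finset.insert_eq_self.2 hu]
      have : B.card = A.card - 1 := by rw [hBe, Finset.card_erase_of_mem hvA]
      omega
    have hcardB : B.card = pdn G := by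
      have : B.card = (A.erase v).card + 1 := Finset.card_insert_of_notMem huA
      have h2 : (A.erase v).card = A.card - 1 := Finset.card_erase_of_mem hvA
      omega
    have hsv : G.dist v t + ∑ x ∈ A.erase v, G.dist x t = ∑ x ∈ A, G.dist x t :=
      Finset.add_sum_erase A (fun x => G.dist x t) hvA
    have hsum' : (∑ x ∈ B, G.dist x t) < n := by
      rw [hB, Finset.sum_insert huA]
      omega
    exact ih _ hsum' B rfl hPDS' hcardB
end

section
/- Let G be a connected graph and let P = v_1 v_2 ... v_n (n ≥ 3) be a terminal path from v_1, i.e., deg(v_i) = 2 for 2 ≤ i ≤ n−1 and deg(v_n) = 1. Let G' be the graph obtained by deleting v_3, ..., v_n (so the terminal path is contracted to the single edge v_1 v_2). Then every subset A ⊆ V(G) \ {v_2, ..., v_n} is a power dominating set of G if and only if it is a power dominating set of G'. -/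
variable {V : Type*}

lemma two_nbrs {V : Type*} [Fintype V] (G : SimpleGraph V) [DecidableRel G.Adj] [DecidableEq V] {c a b : V}
    (hdeg : G.degree c = 2) (hab : a ≠ b) (ha : G.Adj c a) (hb : G.Adj c b) :
    ∀ x, G.Adj c x ↔ x = a ∨ x = b := by
  have hsub : ({a, b} : Finset V) ⊆ G.neighborFinset c := by
    intro x hx
    simp only [Finset.mem_insert, Finset.mem_singleton] at hx
    rcases hx with rfl | rfl <;> simp [SimpleGraph.mem_neighborFinset, ha, hb]
  have hcard : (G.neighborFinset c).card ≤ ({a, b} : Finset V).card := by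
    rw [Finset.card_pair hab]
    rw [SimpleGraph.card_neighborFinset_eq_degree, hdeg]
  have := Finset.eq_of_subset_of_card_le hsub hcard
  intro x
  rw [← SimpleGraph.mem_neighborFinset, ← this]
  simp

lemma one_nbr {V : Type*} [Fintype V] (G : SimpleGraph V) [DecidableRel G.Adj] [DecidableEq V] {c a : V}
    (hdeg : G.degree c = 1) (ha : G.Adj c a) :
    ∀ x, G.Adj c x ↔ x = a := by
  have hsub : ({a} : Finset V) ⊆ G.neighborFinset c := by
    intro x hx
    simp only [Finset.mem_singleton] at hx
    subst hx; simp [SimpleGraph.mem_neighborFinset, ha]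
  have hcard : (G.neighborFinset c).card ≤ ({a} : Finset V).card := by
    simp [SimpleGraph.card_neighborFinset_eq_degree, hdeg]
  have := Finset.eq_of_subset_of_card_le hsub hcard
  intro x
  rw [← SimpleGraph.mem_neighborFinset, ← this]
  simp

/-- Contracting a terminal path $v_1 v_2 ... v_n$ to the edge $v_1 v_2$ (deleting
$v_3,...,v_n$) preserves power dominating sets avoiding $v_2,...,v_n$ (0-indexed below). -/
theorem stmt_3 {V : Type*} [Fintype V] (G : SimpleGraph V) [DecidableRel G.Adj]
    (hc : G.Connected) (n : ℕ) (hn : 3 ≤ n) (v : ℕ → V)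
    (hinj : ∀ i j, i < n → j < n → v i = v j → i = j)
    (hadj : ∀ i, i + 1 < n → G.Adj (v i) (v (i + 1)))
    (hdeg2 : ∀ i, 1 ≤ i → i < n - 1 → G.degree (v i) = 2)
    (hdeg1 : G.degree (v (n - 1)) = 1)
    (s : Set V) (hs : s = {w | ∀ i, 2 ≤ i → i < n → w ≠ v i})
    (A : Set V) (hA : ∀ i, 1 ≤ i → i < n → v i ∉ A) :
    IsPDS G A ↔ IsPDS (G.induce s) (Subtype.val ⁻¹' A) := by
  classical
  have hmem : ∀ x, x ∈ s ↔ ∀ i, 2 ≤ i → i < n → x ≠ v i := by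
    subst hs; intro x; exact Iff.rfl
  have hvne : ∀ i j, i < n → j < n → i ≠ j → v i ≠ v j := by
    intro i j hi hj hij h; exact hij (hinj i j hi hj h)
  -- neighbor characterizations
  have hnbr2 : ∀ i, 1 ≤ i → i < n - 1 → ∀ x, G.Adj (v i) x ↔ x = v (i-1) ∨ x = v (i+1) := by
    intro i h1 h2
    have hi1 : i - 1 + 1 = i := Nat.succ_pred_eq_of_pos h1
    have hin : i + 1 < n := by omega
    have ha : G.Adj (v i) (v (i-1)) := by
      have := hadj (i-1) (by omega)
      rw [hi1] at this; exact this.symm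
    have hb : G.Adj (v i) (v (i+1)) := hadj i hin
    exact two_nbrs G (hdeg2 i h1 h2) (hvne (i-1) (i+1) (by omega) hin (by omega)) ha hb
  have hnbr1 : ∀ x, G.Adj (v (n-1)) x ↔ x = v (n-2) := by
    have ha : G.Adj (v (n-1)) (v (n-2)) := by
      have := hadj (n-2) (by omega)
      have h : n - 2 + 1 = n - 1 := by omega
      rw [h] at this; exact this.symm
    exact one_nbr G hdeg1 ha
  have hv1_nbr : ∀ x, G.Adj (v 1) x ↔ x = v 0 ∨ x = v 2 := by
    have := hnbr2 1 le_rfl (by omega)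
    simpa using this
  have hv0s : v 0 ∈ s := by
    rw [hmem]; intro i h2 hi h; exact absurd (hinj 0 i (by omega) hi h) (by omega)
  have hv1s : v 1 ∈ s := by
    rw [hmem]; intro i h2 hi h; exact absurd (hinj 1 i (by omega) hi h) (by omega)
  have hs_or_tail : ∀ x, x ∈ s ∨ ∃ i, 2 ≤ i ∧ i < n ∧ x = v i := by
    intro x
    by_cases h : x ∈ s
    · exact Or.inl h
    · right
      rw [hmem] at h
      push_neg at h
      obtain ⟨i, h2, hi, he⟩ := h
      exact ⟨i, h2, hi, he⟩
  have htail_not_s : ∀ i, 2 ≤ i → i < n → v i ∉ s := by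
    intro i h2 hi h
    exact (hmem (v i)).1 h i h2 hi rfl
  have htail_nbr : ∀ i x, 2 ≤ i → i < n → G.Adj (v i) x →
      x = v (i-1) ∨ (x = v (i+1) ∧ i + 1 < n) := by
    intro i x h2 hi hadjx
    by_cases h : i < n - 1
    · rcases (hnbr2 i (by omega) h x).1 hadjx with h' | h'
      · exact Or.inl h'
      · exact Or.inr ⟨h', by omega⟩
    · have : i = n - 1 := by omega
      subst this
      left
      have := (hnbr1 x).1 hadjx
      have he : n - 2 = n - 1 - 1 := by omega
      rw [← he]; exact this
  -- a vertex of s other than v 1 has all its G-neighbors in s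
  have hs_nbr : ∀ u x, u ∈ s → u ≠ v 1 → G.Adj u x → x ∈ s := by
    intro u x hus hu1 hadjx
    rcases hs_or_tail x with h | ⟨i, h2, hi, rfl⟩
    · exact h
    · exfalso
      rcases htail_nbr i u h2 hi hadjx.symm with h | ⟨h, hin⟩
      · rcases Nat.lt_or_ge 1 (i-1) with h' | h'
        · exact htail_not_s (i-1) (by omega) (by omega) (h ▸ hus)
        · have : i - 1 = 1 := by omega
          exact hu1 (by rw [h, this])
      · exact htail_not_s (i+1) (by omega) hin (h ▸ hus)
  -- closed neighborhood facts
  have hcnA_s : ∀ x, x ∈ closedNbhd G A → x ∈ s := by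
    intro x hx
    rcases hs_or_tail x with h | ⟨i, h2, hi, rfl⟩
    · exact h
    · exfalso
      obtain ⟨a, haA, h⟩ := hx
      rcases h with rfl | h
      · exact hA i (by omega) hi haA
      · rcases htail_nbr i a h2 hi h.symm with h' | ⟨h', hin⟩
        · exact hA (i-1) (by omega) (by omega) (h' ▸ haA)
        · exact hA (i+1) (by omega) hin (h' ▸ haA)
  have hAs : ∀ a, a ∈ A → a ∈ s := by
    intro a ha
    rcases hs_or_tail a with h | ⟨i, h2, hi, rfl⟩
    · exact h
    · exact absurd ha (hA i (by omega) hi)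
  have hcn_v1 : v 1 ∈ closedNbhd G A → v 0 ∈ A := by
    intro h
    obtain ⟨a, haA, h⟩ := h
    rcases h with rfl | h
    · exact absurd haA (hA 1 le_rfl (by omega))
    · rcases (hv1_nbr a).1 h.symm with rfl | rfl
      · exact haA
      · exact absurd haA (hA 2 (by omega) (by omega))
  have hcn' : closedNbhd (G.induce s) (Subtype.val ⁻¹' A) = Subtype.val ⁻¹' (closedNbhd G A) := by
    ext ⟨w, hw⟩
    constructor
    · rintro ⟨a, haA, h⟩
      refine ⟨(a : V), haA, ?_⟩
      rcases h with h | h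
      · exact Or.inl (congrArg Subtype.val h)
      · exact Or.inr h
    · rintro ⟨a, haA, h⟩
      refine ⟨⟨a, hAs a haA⟩, haA, ?_⟩
      rcases h with rfl | h
      · exact Or.inl rfl
      · exact Or.inr h
  -- === forward direction main induction ===
  have main1 : ∀ O, Relation.ReflTransGen (ForceStep G) (closedNbhd G A) O →
      ((∀ i, 1 ≤ i → i < n → v i ∈ O → v (i-1) ∈ O) ∧
       Relation.ReflTransGen (ForceStep (G.induce s))
         (closedNbhd (G.induce s) (Subtype.val ⁻¹' A)) (Subtype.val ⁻¹' O)) := by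
    intro O hO
    induction hO with
    | refl =>
      constructor
      · intro i h1 hi hvi
        have his : v i ∈ s := hcnA_s _ hvi
        have hi1 : i = 1 := by
          by_contra h
          exact htail_not_s i (by omega) hi his
        subst hi1
        have h0 : (1:ℕ) - 1 = 0 := rfl
        rw [h0]
        exact ⟨v 0, hcn_v1 hvi, Or.inl rfl⟩
      · rw [hcn']
    | @tail b c hab hbc ih =>
      obtain ⟨hInv, hRTG⟩ := ih
      obtain ⟨u, w, huO, hwO, huw, huniq, rfl⟩ := hbc
      have hInv' : ∀ i, 1 ≤ i → i < n → v i ∈ insert w b → v (i-1) ∈ insert w b := by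
        intro i h1 hi hvi
        rcases Set.mem_insert_iff.1 hvi with he | hvi
        · -- v i = w, forced by u
          have hadju : G.Adj (v i) u := (he ▸ huw).symm
          by_cases hlt : i < n - 1
          · rcases (hnbr2 i h1 hlt u).1 hadju with h' | h'
            · exact Set.mem_insert_iff.2 (Or.inr (h' ▸ huO))
            · exfalso
              have := hInv (i+1) (by omega) (by omega) (h' ▸ huO)
              have hii : i + 1 - 1 = i := by omega
              rw [hii] at this
              exact hwO (he ▸ this)
          · have hieq : i = n - 1 := by omega
            have := (hnbr1 u).1 (hieq ▸ hadju)
            have hee : n - 2 = i - 1 := by omega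
            rw [hee] at this
            exact Set.mem_insert_iff.2 (Or.inr (this ▸ huO))
        · exact Set.mem_insert_iff.2 (Or.inr (hInv i h1 hi hvi))
      refine ⟨hInv', ?_⟩
      by_cases hws : w ∈ s
      · have hus : u ∈ s := by
          by_contra hus
          rcases hs_or_tail u with h | ⟨i, h2, hi, rfl⟩
          · exact hus h
          · rcases htail_nbr i w h2 hi huw with h' | ⟨h', hin⟩
            · by_cases h2' : i = 2
              · subst h2'
                have hb1 : v 1 ∈ b := hInv 2 (by omega) hi huO
                have : (2:ℕ) - 1 = 1 := rfl
                rw [this] at h'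
                exact hwO (h' ▸ hb1)
              · exact htail_not_s (i-1) (by omega) (by omega) (h' ▸ hws)
            · exact htail_not_s (i+1) (by omega) hin (h' ▸ hws)
        refine hRTG.tail ?_
        refine ⟨⟨u, hus⟩, ⟨w, hws⟩, huO, hwO, huw, ?_, ?_⟩
        · rintro ⟨x, hxs⟩ hadjx hxO
          exact Subtype.ext (huniq x hadjx hxO)
        · ext ⟨x, hxs⟩
          simp [Set.mem_insert_iff, Subtype.ext_iff]
      · have heq : (Subtype.val ⁻¹' (insert w b) : Set s) = Subtype.val ⁻¹' b := by
          ext ⟨x, hxs⟩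
          simp only [Set.mem_preimage, Set.mem_insert_iff]
          constructor
          · rintro (rfl | h)
            · exact absurd hxs hws
            · exact h
          · exact Or.inr
        rw [heq]
        exact hRTG
  -- === backward direction main induction ===
  have main2 : ∀ O' : Set s, Relation.ReflTransGen (ForceStep (G.induce s))
      (closedNbhd (G.induce s) (Subtype.val ⁻¹' A)) O' →
      (((⟨v 1, hv1s⟩ : s) ∈ O' → (⟨v 0, hv0s⟩ : s) ∈ O') ∧
       Relation.ReflTransGen (ForceStep G) (closedNbhd G A) (Subtype.val '' O')) := by
    intro O' hO'
    induction hO' with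
    | refl =>
      constructor
      · intro h
        rw [hcn'] at h ⊢
        exact ⟨v 0, hcn_v1 h, Or.inl rfl⟩
      · have himg : Subtype.val '' (closedNbhd (G.induce s) (Subtype.val ⁻¹' A))
            = closedNbhd G A := by
          rw [hcn', Subtype.image_preimage_coe]
          exact Set.inter_eq_right.2 hcnA_s
        rw [himg]
    | @tail b c hab hbc ih =>
      obtain ⟨hInv, hRTG⟩ := ih
      obtain ⟨u', w', hu'O, hw'O, hu'w', huniq', rfl⟩ := hbc
      have hadjG : G.Adj (u' : V) (w' : V) := hu'w'
      have hu1 : (u' : V) ≠ v 1 := by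
        intro h
        have hadj1 : G.Adj (v 1) (w' : V) := h ▸ hadjG
        have hw0 : (w' : V) = v 0 := by
          rcases (hv1_nbr _).1 hadj1 with h' | h'
          · exact h'
          · exact absurd (h' ▸ w'.2) (htail_not_s 2 le_rfl (by omega))
        have hub : (⟨v 1, hv1s⟩ : s) ∈ b := by
          have : u' = ⟨v 1, hv1s⟩ := Subtype.ext h
          exact this ▸ hu'O
        have hb0 := hInv hub
        have hw'' : w' = ⟨v 0, hv0s⟩ := Subtype.ext hw0
        exact hw'O (hw'' ▸ hb0)
      have hnbrs : ∀ x, G.Adj (u' : V) x → x ∈ s := fun x => hs_nbr _ x u'.2 hu1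
      constructor
      · intro h
        rcases Set.mem_insert_iff.1 h with he | hb
        · -- w' = ⟨v 1⟩, forced by u'
          have hadj1 : G.Adj (v 1) (u' : V) := by
            have := hadjG.symm
            rw [← he] at this
            exact this
          have hu0 : (u' : V) = v 0 := by
            rcases (hv1_nbr _).1 hadj1 with h' | h'
            · exact h'
            · exact absurd (h' ▸ u'.2) (htail_not_s 2 le_rfl (by omega))
          have : u' = ⟨v 0, hv0s⟩ := Subtype.ext hu0
          exact Set.mem_insert_iff.2 (Or.inr (this ▸ hu'O))
        · exact Set.mem_insert_iff.2 (Or.inr (hInv hb))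
      · refine hRTG.tail ?_
        refine ⟨(u' : V), (w' : V), ⟨u', hu'O, rfl⟩, ?_, hadjG, ?_, ?_⟩
        · rintro ⟨y, hyO, hy⟩
          exact hw'O (show w' ∈ b from (Subtype.ext hy) ▸ hyO)
        · intro x hadjx hxO
          have hxs := hnbrs x hadjx
          have hxb : (⟨x, hxs⟩ : s) ∉ b := fun h => hxO ⟨⟨x, hxs⟩, h, rfl⟩
          exact congrArg Subtype.val (huniq' ⟨x, hxs⟩ hadjx hxb)
        · rw [Set.image_insert_eq]
  -- === tail chain ===
  have chain : ∀ m, 2 + m ≤ n →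
      Relation.ReflTransGen (ForceStep G) {x | x ∈ s}
        {x | x ∈ s ∨ ∃ j, 2 ≤ j ∧ j < 2 + m ∧ x = v j} := by
    intro m
    induction m with
    | zero =>
      intro _
      have heq : {x | x ∈ s ∨ ∃ j, 2 ≤ j ∧ j < 2 + 0 ∧ x = v j} = {x | x ∈ s} := by
        ext x
        simp only [Set.mem_setOf_eq, or_iff_left_iff_imp]
        rintro ⟨j, h1, h2, _⟩; omega
      rw [heq]
    | succ m ih =>
      intro hm
      refine (ih (by omega)).tail ?_
      have hkn : 2 + m < n := by omega
      have hk1 : (2 + m) - 1 + 1 = 2 + m := by omega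
      refine ⟨v (2 + m - 1), v (2 + m), ?_, ?_, ?_, ?_, ?_⟩
      · by_cases hm0 : m = 0
        · subst hm0
          exact Or.inl hv1s
        · exact Or.inr ⟨2 + m - 1, by omega, by omega, rfl⟩
      · rintro (h | ⟨j, hj1, hj2, hj3⟩)
        · exact htail_not_s (2+m) (by omega) hkn h
        · exact absurd (hinj _ _ hkn (by omega) hj3) (by omega)
      · have := hadj (2 + m - 1) (by omega)
        rw [hk1] at this
        exact this
      · intro x hadjx hxO
        by_cases hm0 : m = 0
        · subst hm0
          have h1 : (2:ℕ) + 0 - 1 = 1 := rfl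
          rw [h1] at hadjx
          rcases (hv1_nbr x).1 hadjx with rfl | rfl
          · exact absurd (Or.inl hv0s) hxO
          · rfl
        · have h2m : 1 ≤ 2 + m - 1 := by omega
          have h2m' : 2 + m - 1 < n - 1 := by omega
          rcases (hnbr2 (2+m-1) h2m h2m' x).1 hadjx with h' | h'
          · exfalso
            apply hxO
            by_cases hm1 : m = 1
            · subst hm1
              left
              have : (2:ℕ) + 1 - 1 - 1 = 1 := rfl
              rw [this] at h'
              exact h' ▸ hv1s
            · right
              exact ⟨2 + m - 1 - 1, by omega, by omega, h'⟩
          · rw [hk1] at h'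
            exact h'
      · ext x
        simp only [Set.mem_setOf_eq, Set.mem_insert_iff]
        constructor
        · rintro (h | ⟨j, hj1, hj2, rfl⟩)
          · exact Or.inr (Or.inl h)
          · by_cases hj : j = 2 + m
            · subst hj; exact Or.inl rfl
            · exact Or.inr (Or.inr ⟨j, hj1, by omega, rfl⟩)
        · rintro (rfl | h | ⟨j, hj1, hj2, rfl⟩)
          · exact Or.inr ⟨2 + m, by omega, by omega, rfl⟩
          · exact Or.inl h
          · exact Or.inr ⟨j, hj1, by omega, rfl⟩
  -- === assembly ===
  constructor
  · intro h
    have h2 := (main1 Set.univ h).2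
    rw [Set.preimage_univ] at h2
    exact h2
  · intro h
    have h2 := (main2 Set.univ h).2
    have him : Subtype.val '' (Set.univ : Set s) = {x | x ∈ s} := by
      rw [Set.image_univ, Subtype.range_coe]
      exact Set.setOf_mem_eq.symm
    rw [him] at h2
    have h3 := chain (n-2) (by omega)
    have huniv : {x | x ∈ s ∨ ∃ j, 2 ≤ j ∧ j < 2 + (n-2) ∧ x = v j} = Set.univ := by
      ext x
      simp only [Set.mem_setOf_eq, Set.mem_univ, iff_true]
      rcases hs_or_tail x with hx | ⟨i, hi2, hi, rfl⟩
      · exact Or.inl hx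
      · exact Or.inr ⟨i, hi2, by omega, rfl⟩
    rw [huniv] at h3
    exact h2.trans h3
end

section
/- Let G be a connected graph and F a fort of G. Then every power dominating set A of G satisfies: either A ∩ F ≠ ∅, or some vertex of A has a neighbor in F. -/
variable {V : Type*}

/-- Every power dominating set either meets a fort or has a vertex with a neighbor in the fort. -/
theorem stmt_6 {V : Type*} (G : SimpleGraph V) (hc : G.Connected) (F A : Set V)
    (hF : IsFort G F) (hA : IsPDS G A) :
    (A ∩ F).Nonempty ∨ ∃ a ∈ A, ∃ w ∈ F, G.Adj a w := by
  by_contra h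
  push_neg at h
  obtain ⟨hAF, hnb⟩ := h
  -- closed neighborhood disjoint from F
  have h0 : closedNbhd G A ∩ F = ∅ := by
    ext x
    simp only [Set.mem_inter_iff, Set.mem_empty_iff_false, iff_false]
    rintro ⟨⟨v, hv, rfl | hadj⟩, hxF⟩
    · exact Set.eq_empty_iff_forall_notMem.mp hAF x ⟨hv, hxF⟩
    · exact hnb v hv x hxF hadj
  -- invariant preserved by force steps
  have key : ∀ O, Observes G A O → O ∩ F = ∅ := by
    intro O hO
    induction hO with
    | refl => exact h0
    | tail _ hstep ih =>
      obtain ⟨u, w, huS, hwS, huw, huniq, rfl⟩ := hstep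
      by_cases hwF : w ∈ F
      · exfalso
        have huF : u ∉ F := fun huF =>
          Set.eq_empty_iff_forall_notMem.mp ih u ⟨huS, huF⟩
        apply hF.2 u huF
        refine ⟨w, ⟨hwF, huw⟩, ?_⟩
        rintro x ⟨hxF, hx⟩
        apply huniq x hx
        intro hxS
        exact Set.eq_empty_iff_forall_notMem.mp ih x ⟨hxS, hxF⟩
      · ext x
        simp only [Set.mem_inter_iff, Set.mem_insert_iff, Set.mem_empty_iff_false, iff_false]
        rintro ⟨rfl | hxS, hxF⟩
        · exact hwF hxF
        · exact Set.eq_empty_iff_forall_notMem.mp ih x ⟨hxS, hxF⟩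
  have := key Set.univ hA
  obtain ⟨x, hx⟩ := hF.1
  have : x ∈ (Set.univ : Set V) ∩ F := ⟨trivial, hx⟩
  rw [key Set.univ hA] at this
  exact this
end

section
/- Let G be a graph and F a fort of G. If S is a set of observed vertices with S ∩ F = ∅ and no vertex of F is observed, then no vertex of F ever becomes observed under the zero forcing step alone (i.e., forts block zero forcing). -/
variable {V : Type*}

/-- Forts block zero forcing: if no vertex of a fort is observed initially, then no vertex of
the fort ever becomes observed under zero forcing steps alone. -/
theorem stmt_7 {V : Type*} (G : SimpleGraph V) (F S T : Set V) (hF : IsFort G F)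
    (hS : S ∩ F = ∅) (h : Relation.ReflTransGen (ForceStep G) S T) :
    T ∩ F = ∅ := by
  induction h with
  | refl => exact hS
  | tail _ hstep ih =>
    obtain ⟨u, w, huS, hwS, hadj, huniq, rfl⟩ := hstep
    have hwF : w ∉ F := by
      intro hwF
      have huF : u ∉ F := by
        intro huF
        exact absurd (Set.mem_inter huS huF) (by simp [ih])
      refine hF.2 u huF ⟨w, ⟨hwF, hadj⟩, ?_⟩
      rintro x ⟨hxF, hxadj⟩
      exact huniq x hxadj (fun hxS => absurd (Set.mem_inter hxS hxF) (by simp [ih]))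
    ext x
    simp only [Set.mem_inter_iff, Set.mem_insert_iff, Set.mem_empty_iff_false, iff_false]
    rintro ⟨h1 | h1, h2⟩
    · exact hwF (h1 ▸ h2)
    · exact absurd (Set.mem_inter h1 h2) (by simp [ih])
end

section
/- If the power domination process with input set A terminates with observed set O ≠ V(G), then the set of unobserved vertices V(G) \ O is a fort of G. -/
variable {V : Type*}

/-- If the power domination process stalls without observing everything, the unobserved
vertices form a fort. -/
theorem stmt_17 {V : Type*} (G : SimpleGraph V) (A O : Set V) (h : Observes G A O)
    (hst : Stalled G O) (hne : O ≠ Set.univ) :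
    IsFort G (Set.univ \ O) := by
  constructor
  · rcases Set.exists_of_ssubset (hne.lt_top) with ⟨x, -, hx⟩
    exact ⟨x, Set.mem_univ x, hx⟩
  · rintro u hu ⟨w, ⟨⟨-, hwO⟩, hadj⟩, huniq⟩
    simp only [Set.mem_diff, Set.mem_univ, true_and, not_not] at hu hwO
    exact hst (insert w O) ⟨u, w, hu, hwO, hadj, fun x hx hxO =>
      huniq x ⟨⟨Set.mem_univ x, hxO⟩, hx⟩, rfl⟩
end
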